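/- arXiv:2110.01753 — 3 statements merged into one kernel-verified Lean document; each statement's English description precedes it below -/
import Mathlib

section
/- Let c, b ∈ k be nonzero and a ∈ k arbitrary. Then k[[X,Y,Z]]/(Z² + cX³Y + (aX+b)Y³) is isomorphic, as a k-algebra, to k[[X,Y,Z]]/(Z² + X³ + XY³). -/
open MvPowerSeries

namespace SubstAux

variable {k : Type*} [CommRing k]

/-- total weight of an exponent vector -/
def wt (d : Fin 3 →₀ ℕ) : ℕ := ∑ i, d i

lemma wt_add (u v : Fin 3 →₀ ℕ) : wt (u + v) = wt u + wt v := by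
  simp [wt, Finset.sum_add_distrib]

lemma le_wt (d : Fin 3 →₀ ℕ) (i : Fin 3) : d i ≤ wt d :=
  Finset.single_le_sum (fun _ _ => Nat.zero_le _) (Finset.mem_univ i)

lemma eq_zero_of_wt_eq_zero {d : Fin 3 →₀ ℕ} (h : wt d = 0) : d = 0 := by
  ext i
  have h2 := le_wt d i
  simp only [h] at h2
  simpa using Nat.le_zero.mp h2

/-- bound finsupp -/
noncomputable def bnd (n : ℕ) : Fin 3 →₀ ℕ := Finsupp.equivFunOnFinite.symm (fun _ => n)

lemma bnd_apply (n : ℕ) (i : Fin 3) : bnd n i = n := rfl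

/-- truncation set -/
noncomputable def T (n : ℕ) : Finset (Fin 3 →₀ ℕ) := Finset.Iic (bnd n)

lemma mem_T {m : Fin 3 →₀ ℕ} {n : ℕ} : m ∈ T n ↔ ∀ i, m i ≤ n := by
  simp [T, Finset.mem_Iic, Finsupp.le_def, bnd_apply]

lemma mem_T_of_wt {m : Fin 3 →₀ ℕ} {n : ℕ} (h : wt m ≤ n) : m ∈ T n :=
  mem_T.2 fun i => le_trans (le_wt m i) h

lemma lt_wt_of_not_mem_T {m : Fin 3 →₀ ℕ} {n : ℕ} (h : m ∉ T n) : n < wt m := by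
  by_contra hn
  exact h (mem_T_of_wt (by omega))

lemma T_subset {n n' : ℕ} (h : n ≤ n') : T n ⊆ T n' := fun m hm =>
  mem_T.2 fun i => le_trans (mem_T.1 hm i) h

end SubstAux

namespace SubstAux

variable {k : Type*} [CommRing k]

open MvPolynomial

variable (p : Fin 3 → MvPolynomial (Fin 3) k)

/-- products of powers of the substituted polynomials -/
noncomputable def P (m : Fin 3 →₀ ℕ) : MvPolynomial (Fin 3) k := ∏ i, p i ^ m i

lemma P_add (u v : Fin 3 →₀ ℕ) : P p (u + v) = P p u * P p v := by
  simp [P, pow_add, Finset.prod_mul_distrib]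

lemma P_zero : P p 0 = 1 := by simp [P]

/-- "order at least n" predicate -/
def OrdGe (Q : MvPolynomial (Fin 3) k) (n : ℕ) : Prop :=
  ∀ d, wt d < n → MvPolynomial.coeff d Q = 0

lemma ordGe_mul {Q R : MvPolynomial (Fin 3) k} {n m : ℕ}
    (hQ : OrdGe Q n) (hR : OrdGe R m) : OrdGe (Q * R) (n + m) := by
  intro d hd
  rw [MvPolynomial.coeff_mul]
  apply Finset.sum_eq_zero
  rintro ⟨u, v⟩ huv
  rw [Finset.HasAntidiagonal.mem_antidiagonal] at huv
  have hw : wt u + wt v = wt d := by rw [← wt_add, huv]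
  rcases lt_or_ge (wt u) n with h | h
  · rw [hQ u h, zero_mul]
  · rw [hR v (by omega), mul_zero]

lemma ordGe_pow {Q : MvPolynomial (Fin 3) k} {n : ℕ} (hQ : OrdGe Q n) (e : ℕ) :
    OrdGe (Q ^ e) (n * e) := by
  induction e with
  | zero => intro d hd; simp at hd
  | succ e ih =>
    intro d hd
    have := ordGe_mul ih hQ
    rw [pow_succ]
    exact this d (by rw [Nat.mul_succ] at hd; omega)

lemma ordGe_p (hp : ∀ i, MvPolynomial.constantCoeff (p i) = 0) (i : Fin 3) :
    OrdGe (p i) 1 := by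
  intro d hd
  have : d = 0 := eq_zero_of_wt_eq_zero (by omega)
  subst this
  exact hp i

lemma coeff_P_eq_zero (hp : ∀ i, MvPolynomial.constantCoeff (p i) = 0)
    {d m : Fin 3 →₀ ℕ} (h : wt d < wt m) :
    MvPolynomial.coeff d (P p m) = 0 := by
  have key : OrdGe (P p m) (wt m) := by
    have : ∀ s : Finset (Fin 3), OrdGe (∏ i ∈ s, p i ^ m i) (∑ i ∈ s, m i) := by
      intro s
      induction s using Finset.induction with
      | empty => intro d hd; simp at hd
      | @insert x s hx ih =>
        rw [Finset.prod_insert hx, Finset.sum_insert hx]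
        have h1 : OrdGe (p x ^ m x) (1 * m x) := ordGe_pow (ordGe_p p hp x) (m x)
        rw [one_mul] at h1
        exact ordGe_mul h1 ih
    exact this Finset.univ
  exact key d h

end SubstAux

namespace SubstAux

variable {k : Type*} [CommRing k]

open MvPolynomial

variable (p : Fin 3 → MvPolynomial (Fin 3) k)

/-- the substitution map -/
noncomputable def S (f : MvPowerSeries (Fin 3) k) : MvPowerSeries (Fin 3) k :=
  fun d => ∑ m ∈ T (wt d), MvPowerSeries.coeff m f * MvPolynomial.coeff d (P p m)

lemma coeff_S (f : MvPowerSeries (Fin 3) k) (d : Fin 3 →₀ ℕ) :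
    MvPowerSeries.coeff d (S p f) =
      ∑ m ∈ T (wt d), MvPowerSeries.coeff m f * MvPolynomial.coeff d (P p m) := rfl

lemma coeff_S_eq (hp : ∀ i, MvPolynomial.constantCoeff (p i) = 0)
    (f : MvPowerSeries (Fin 3) k) (d : Fin 3 →₀ ℕ) {T' : Finset (Fin 3 →₀ ℕ)}
    (hT : T (wt d) ⊆ T') :
    MvPowerSeries.coeff d (S p f) =
      ∑ m ∈ T', MvPowerSeries.coeff m f * MvPolynomial.coeff d (P p m) := by
  rw [coeff_S]
  apply Finset.sum_subset hT
  intro m _ hm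
  rw [coeff_P_eq_zero p hp (lt_of_le_of_lt (le_refl _) (lt_wt_of_not_mem_T hm)), mul_zero]

end SubstAux

namespace SubstAux

variable {k : Type*} [CommRing k]

open MvPolynomial

variable (p : Fin 3 → MvPolynomial (Fin 3) k)

lemma S_add (f g : MvPowerSeries (Fin 3) k) : S p (f + g) = S p f + S p g := by
  apply MvPowerSeries.ext; intro d
  simp only [map_add, coeff_S, ← Finset.sum_add_distrib]
  exact Finset.sum_congr rfl fun m _ => by ring

lemma S_smul (r : k) (f : MvPowerSeries (Fin 3) k) : S p (r • f) = r • S p f := by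
  apply MvPowerSeries.ext; intro d
  simp only [coeff_S, MvPowerSeries.coeff_smul, Finset.smul_sum, smul_eq_mul, mul_assoc,
    Finset.mul_sum]

lemma S_monomial (hp : ∀ i, MvPolynomial.constantCoeff (p i) = 0) (m : Fin 3 →₀ ℕ) (a : k) :
    S p (MvPowerSeries.monomial m a) = ((MvPolynomial.C a * P p m : MvPolynomial (Fin 3) k) :
      MvPowerSeries (Fin 3) k) := by
  apply MvPowerSeries.ext; intro d
  rw [coeff_S, MvPolynomial.coeff_coe, MvPolynomial.coeff_C_mul]
  classical
  rw [Finset.sum_eq_single m]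
  · rw [MvPowerSeries.coeff_monomial_same]
  · intro m' _ hm'
    rw [MvPowerSeries.coeff_monomial_ne hm', zero_mul]
  · intro hm
    rw [coeff_P_eq_zero p hp (lt_wt_of_not_mem_T hm), mul_zero]

lemma S_one (hp : ∀ i, MvPolynomial.constantCoeff (p i) = 0) : S p 1 = 1 := by
  have h1 : (1 : MvPowerSeries (Fin 3) k) = MvPowerSeries.monomial 0 1 := by
    simp [MvPowerSeries.monomial_zero_eq_C]
  rw [h1, S_monomial p hp, P_zero]
  push_cast
  simp [MvPowerSeries.monomial_zero_eq_C]

lemma S_C (hp : ∀ i, MvPolynomial.constantCoeff (p i) = 0) (a : k) : S p (MvPowerSeries.C (σ := Fin 3) (R := k) a) = MvPowerSeries.C (σ := Fin 3) (R := k) a := by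
  have h1 : (MvPowerSeries.C (σ := Fin 3) (R := k) a) = MvPowerSeries.monomial 0 a := by
    simp [MvPowerSeries.monomial_zero_eq_C]
  rw [h1, S_monomial p hp, P_zero]
  push_cast
  simp [MvPowerSeries.monomial_zero_eq_C]

end SubstAux

namespace SubstAux

variable {k : Type*} [CommRing k]

open MvPolynomial

variable (p : Fin 3 → MvPolynomial (Fin 3) k)

lemma S_mul (hp : ∀ i, MvPolynomial.constantCoeff (p i) = 0)
    (f g : MvPowerSeries (Fin 3) k) : S p (f * g) = S p f * S p g := by
  classical
  apply MvPowerSeries.ext; intro d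
  have hvan : ∀ u v : Fin 3 →₀ ℕ, u + v ∉ T (wt d) →
      MvPolynomial.coeff d (P p (u + v)) = 0 := fun u v huv =>
    coeff_P_eq_zero p hp (lt_wt_of_not_mem_T huv)
  -- left hand side
  have hL : MvPowerSeries.coeff d (S p (f * g)) =
      ∑ x ∈ T (wt d) ×ˢ T (wt d),
        MvPowerSeries.coeff x.1 f * MvPowerSeries.coeff x.2 g
          * MvPolynomial.coeff d (P p (x.1 + x.2)) := by
    rw [coeff_S]
    have h1 : ∀ m ∈ T (wt d),
        MvPowerSeries.coeff m (f * g) * MvPolynomial.coeff d (P p m)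
        = ∑ x ∈ Finset.HasAntidiagonal.antidiagonal m,
            MvPowerSeries.coeff x.1 f * MvPowerSeries.coeff x.2 g
              * MvPolynomial.coeff d (P p (x.1 + x.2)) := by
      intro m _
      rw [MvPowerSeries.coeff_mul, Finset.sum_mul]
      apply Finset.sum_congr rfl
      rintro ⟨u, v⟩ huv
      rw [Finset.HasAntidiagonal.mem_antidiagonal] at huv
      rw [huv]
    rw [Finset.sum_congr rfl h1]
    have hdisj : (↑(T (wt d)) : Set (Fin 3 →₀ ℕ)).PairwiseDisjoint
        (fun m => Finset.HasAntidiagonal.antidiagonal m) := by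
      intro x _ y _ hxy
      simp only [Function.onFun]
      rw [Finset.disjoint_left]
      rintro ⟨u, v⟩ hu hv
      rw [Finset.HasAntidiagonal.mem_antidiagonal] at hu hv
      exact hxy (hu ▸ hv)
    rw [← Finset.sum_biUnion hdisj]
    apply Finset.sum_subset
    · intro x hx
      rw [Finset.mem_biUnion] at hx
      obtain ⟨m, hm, hxm⟩ := hx
      rw [Finset.HasAntidiagonal.mem_antidiagonal] at hxm
      rw [Finset.mem_product]
      constructor
      · exact mem_T.2 fun i => le_trans (by
          have : x.1 i ≤ m i := by
            rw [← hxm]; simp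
          exact this) (mem_T.1 hm i)
      · exact mem_T.2 fun i => le_trans (by
          have : x.2 i ≤ m i := by
            rw [← hxm]; simp
          exact this) (mem_T.1 hm i)
    · intro x hx hxb
      have : x.1 + x.2 ∉ T (wt d) := by
        intro hmem
        apply hxb
        rw [Finset.mem_biUnion]
        exact ⟨x.1 + x.2, hmem, Finset.HasAntidiagonal.mem_antidiagonal.2 rfl⟩
      rw [hvan _ _ this, mul_zero]
  -- right hand side
  have hR : MvPowerSeries.coeff d (S p f * S p g) =
      ∑ x ∈ T (wt d) ×ˢ T (wt d),
        MvPowerSeries.coeff x.1 f * MvPowerSeries.coeff x.2 g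
          * MvPolynomial.coeff d (P p (x.1 + x.2)) := by
    rw [MvPowerSeries.coeff_mul]
    have h2 : ∀ x ∈ Finset.HasAntidiagonal.antidiagonal d,
        MvPowerSeries.coeff x.1 (S p f) * MvPowerSeries.coeff x.2 (S p g)
        = ∑ y ∈ T (wt d) ×ˢ T (wt d),
            MvPowerSeries.coeff y.1 f * MvPowerSeries.coeff y.2 g
              * (MvPolynomial.coeff x.1 (P p y.1) * MvPolynomial.coeff x.2 (P p y.2)) := by
      intro x hx
      rw [Finset.HasAntidiagonal.mem_antidiagonal] at hx
      have hw : wt x.1 + wt x.2 = wt d := by rw [← wt_add, hx]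
      rw [coeff_S_eq p hp f x.1 (T' := T (wt d)) (T_subset (by omega)),
        coeff_S_eq p hp g x.2 (T' := T (wt d)) (T_subset (by omega)),
        Finset.sum_mul_sum, ← Finset.sum_product']
      apply Finset.sum_congr rfl
      intro y _
      ring
    rw [Finset.sum_congr rfl h2, Finset.sum_comm]
    apply Finset.sum_congr rfl
    intro y _
    rw [P_add, MvPolynomial.coeff_mul, Finset.mul_sum]
  rw [hL, hR]

end SubstAux

namespace SubstAux

variable {k : Type*} [CommRing k]

open MvPolynomial

variable (p : Fin 3 → MvPolynomial (Fin 3) k)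

lemma S_zero : S p 0 = 0 := by
  apply MvPowerSeries.ext; intro d
  simp [coeff_S]

/-- S as an additive monoid hom, for map_sum -/
noncomputable def Sadd : MvPowerSeries (Fin 3) k →+ MvPowerSeries (Fin 3) k :=
  AddMonoidHom.mk' (S p) (S_add p)

lemma S_coe (hp : ∀ i, MvPolynomial.constantCoeff (p i) = 0) (Q : MvPolynomial (Fin 3) k) :
    S p (Q : MvPowerSeries (Fin 3) k)
      = ((aeval p Q : MvPolynomial (Fin 3) k) : MvPowerSeries (Fin 3) k) := by
  have key : ∀ v c, S p ((MvPolynomial.monomial v c : MvPolynomial (Fin 3) k) :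
      MvPowerSeries (Fin 3) k)
      = ((aeval p (MvPolynomial.monomial v c) : MvPolynomial (Fin 3) k) :
          MvPowerSeries (Fin 3) k) := by
    intro v c
    rw [MvPolynomial.coe_monomial, S_monomial p hp, MvPolynomial.aeval_monomial]
    congr 1
    rw [Finsupp.prod_pow]
    rfl
  have h1 : (Q : MvPowerSeries (Fin 3) k)
      = MvPolynomial.coeToMvPowerSeries.ringHom Q := rfl
  have h2 : ((aeval p Q : MvPolynomial (Fin 3) k) : MvPowerSeries (Fin 3) k)
      = MvPolynomial.coeToMvPowerSeries.ringHom (aeval p Q) := rfl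
  have hS : ∀ R, S p R = Sadd p R := fun _ => rfl
  rw [h1, h2, hS]
  conv_lhs => rw [Q.as_sum]
  rw [map_sum, map_sum]
  conv_rhs => rw [Q.as_sum, map_sum, map_sum]
  apply Finset.sum_congr rfl
  intro v _
  exact key v _

end SubstAux

namespace SubstAux

variable {k : Type*} [CommRing k]

open MvPolynomial

lemma S_S (p q : Fin 3 → MvPolynomial (Fin 3) k)
    (hp : ∀ i, MvPolynomial.constantCoeff (p i) = 0)
    (hq : ∀ i, MvPolynomial.constantCoeff (q i) = 0)
    (hcomp : ∀ i, aeval p (q i) = MvPolynomial.X i)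
    (f : MvPowerSeries (Fin 3) k) : S p (S q f) = f := by
  classical
  apply MvPowerSeries.ext; intro d
  rw [coeff_S]
  have step1 : ∀ m ∈ T (wt d),
      MvPowerSeries.coeff m (S q f) * MvPolynomial.coeff d (P p m)
      = ∑ m' ∈ T (3 * wt d), MvPowerSeries.coeff m' f *
          (MvPolynomial.coeff m (P q m') * MvPolynomial.coeff d (P p m)) := by
    intro m hm
    have hwm : wt m ≤ 3 * wt d := by
      have h0 := mem_T.1 hm 0
      have h1 := mem_T.1 hm 1
      have h2 := mem_T.1 hm 2
      have : wt m = m 0 + m 1 + m 2 := by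
        simp [wt, Fin.sum_univ_three]
      omega
    rw [coeff_S_eq q hq f m (T' := T (3 * wt d)) (T_subset hwm), Finset.sum_mul]
    apply Finset.sum_congr rfl
    intro m' _
    ring
  rw [Finset.sum_congr rfl step1, Finset.sum_comm]
  have hPX : ∀ m' : Fin 3 →₀ ℕ, aeval p (P q m')
      = MvPolynomial.monomial m' (1 : k) := by
    intro m'
    rw [P, map_prod, MvPolynomial.monomial_eq, Finsupp.prod_pow]
    simp only [map_pow, hcomp, map_one, one_mul]
  have inner : ∀ m' : Fin 3 →₀ ℕ,
      (∑ m ∈ T (wt d), MvPowerSeries.coeff m' f *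
        (MvPolynomial.coeff m (P q m') * MvPolynomial.coeff d (P p m)))
      = MvPowerSeries.coeff m' f * MvPolynomial.coeff d (aeval p (P q m')) := by
    intro m'
    rw [← Finset.mul_sum]
    congr 1
    have h1 := coeff_S p ((P q m' : MvPolynomial (Fin 3) k) : MvPowerSeries (Fin 3) k) d
    rw [S_coe p hp] at h1
    simp only [MvPolynomial.coeff_coe] at h1
    rw [← h1]
  rw [Finset.sum_congr rfl (fun m' _ => inner m')]
  simp only [hPX, MvPolynomial.coeff_monomial]
  rw [Finset.sum_eq_single d]
  · simp
  · intro m' _ hm'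
    rw [if_neg hm', mul_zero]
  · intro hd
    exact absurd (mem_T_of_wt (by omega)) hd

end SubstAux

namespace SubstAux

variable {k : Type*} [CommRing k]

open MvPolynomial

/-- the substitution algebra equivalence -/
noncomputable def substEquiv (p q : Fin 3 → MvPolynomial (Fin 3) k)
    (hp : ∀ i, MvPolynomial.constantCoeff (p i) = 0)
    (hq : ∀ i, MvPolynomial.constantCoeff (q i) = 0)
    (hpq : ∀ i, aeval p (q i) = MvPolynomial.X i)
    (hqp : ∀ i, aeval q (p i) = MvPolynomial.X i) :
    MvPowerSeries (Fin 3) k ≃ₐ[k] MvPowerSeries (Fin 3) k where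
  toFun := S p
  invFun := S q
  left_inv := S_S q p hq hp hqp
  right_inv := S_S p q hp hq hpq
  map_mul' := S_mul p hp
  map_add' := S_add p
  commutes' := fun r => by
    simpa only [← MvPowerSeries.c_eq_algebraMap] using S_C p hp r

lemma substEquiv_apply (p q hp hq hpq hqp) (f : MvPowerSeries (Fin 3) k) :
    substEquiv p q hp hq hpq hqp f = S p f := rfl

end SubstAux


open SubstAux in
set_option maxHeartbeats 2000000 in
/-- For c, b ≠ 0 and arbitrary a,
k[[X,Y,Z]]/(Z² + cX³Y + (aX+b)Y³) ≅ k[[X,Y,Z]]/(Z² + X³ + XY³). -/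
theorem stmt_16 (k : Type*) [Field k] [IsAlgClosed k] [CharP k 2] (c b a : k)
    (hc : c ≠ 0) (hb : b ≠ 0) :
    Nonempty
      ((MvPowerSeries (Fin 3) k ⧸
          Ideal.span {(X 2 : MvPowerSeries (Fin 3) k) ^ 2 +
            MvPowerSeries.C (σ := Fin 3) (R := k) c * (X 0 ^ 3 * X 1) +
            (MvPowerSeries.C (σ := Fin 3) (R := k) a * X 0 + MvPowerSeries.C (σ := Fin 3) (R := k) b) * X 1 ^ 3}) ≃ₐ[k]
        (MvPowerSeries (Fin 3) k ⧸
          Ideal.span {(X 2 : MvPowerSeries (Fin 3) k) ^ 2 + X 0 ^ 3 + X 0 * X 1 ^ 3})) := by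
  classical
  obtain ⟨α, hα⟩ := IsAlgClosed.exists_pow_nat_eq (k := k) (a / c) zero_lt_two
  obtain ⟨β, hβ⟩ := IsAlgClosed.exists_pow_nat_eq (k := k) (c * α) zero_lt_two
  obtain ⟨μ, hμ⟩ := IsAlgClosed.exists_pow_nat_eq (k := k) b⁻¹ zero_lt_three
  have hμ0 : μ ≠ 0 := by
    intro h
    rw [h, zero_pow (by norm_num : (3:ℕ) ≠ 0)] at hμ
    exact hb (_root_.inv_eq_zero.mp hμ.symm)
  obtain ⟨l, hl⟩ := IsAlgClosed.exists_pow_nat_eq (k := k) (c * μ)⁻¹ zero_lt_three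
  have hl0 : l ≠ 0 := by
    intro h
    rw [h, zero_pow (by norm_num : (3:ℕ) ≠ 0)] at hl
    exact (mul_ne_zero hc hμ0) (_root_.inv_eq_zero.mp hl.symm)
  have ha : c * α ^ 2 = a := by rw [hα]; field_simp
  have E5k : b * μ ^ 3 = 1 := by rw [hμ]; field_simp
  have E6k : c * l ^ 3 * μ = 1 := by
    rw [hl]
    field_simp
  have h2k : (2 : k) = 0 := by
    have := CharP.cast_eq_zero k 2; exact_mod_cast this
  let p : Fin 3 → MvPolynomial (Fin 3) k :=
    ![MvPolynomial.C α * MvPolynomial.C μ * MvPolynomial.X 0 + MvPolynomial.C l * MvPolynomial.X 1,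
      MvPolynomial.C μ * MvPolynomial.X 0,
      MvPolynomial.X 2 + MvPolynomial.C β * MvPolynomial.C l * MvPolynomial.C μ *
        MvPolynomial.X 0 * MvPolynomial.X 1]
  let q : Fin 3 → MvPolynomial (Fin 3) k :=
    ![MvPolynomial.C μ⁻¹ * MvPolynomial.X 1,
      MvPolynomial.C l⁻¹ * MvPolynomial.X 0 +
        MvPolynomial.C α * MvPolynomial.C l⁻¹ * MvPolynomial.X 1,
      MvPolynomial.X 2 + MvPolynomial.C β * MvPolynomial.X 0 * MvPolynomial.X 1 +
        MvPolynomial.C α * MvPolynomial.C β * MvPolynomial.X 1 ^ 2]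
  have hp : ∀ i, MvPolynomial.constantCoeff (p i) = 0 := by
    intro i; fin_cases i <;> simp [p]
  have hq : ∀ i, MvPolynomial.constantCoeff (q i) = 0 := by
    intro i; fin_cases i <;> simp [q]
  have E1 : (MvPolynomial.C μ⁻¹ * MvPolynomial.C μ : MvPolynomial (Fin 3) k) = 1 := by
    rw [← map_mul, inv_mul_cancel₀ hμ0, map_one]
  have E2 : (MvPolynomial.C l⁻¹ * MvPolynomial.C l : MvPolynomial (Fin 3) k) = 1 := by
    rw [← map_mul, inv_mul_cancel₀ hl0, map_one]
  have E3 : (MvPolynomial.C c * MvPolynomial.C α ^ 2 : MvPolynomial (Fin 3) k)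
      = MvPolynomial.C a := by
    rw [← map_pow, ← map_mul, ha]
  have E4 : (MvPolynomial.C β ^ 2 : MvPolynomial (Fin 3) k)
      = MvPolynomial.C c * MvPolynomial.C α := by
    rw [← map_pow, hβ, map_mul]
  have E5 : (MvPolynomial.C b * MvPolynomial.C μ ^ 3 : MvPolynomial (Fin 3) k) = 1 := by
    rw [← map_pow, ← map_mul, E5k, map_one]
  have E6 : (MvPolynomial.C c * MvPolynomial.C l ^ 3 * MvPolynomial.C μ :
      MvPolynomial (Fin 3) k) = 1 := by
    rw [← map_pow, ← map_mul, ← map_mul, E6k, map_one]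
  have E7 : (2 : MvPolynomial (Fin 3) k) = 0 := by
    have h := congrArg (MvPolynomial.C : k → MvPolynomial (Fin 3) k) h2k
    rwa [map_ofNat, map_zero] at h
  have hpq0 : MvPolynomial.aeval p (q 0) = (MvPolynomial.X 0 : MvPolynomial (Fin 3) k) := by
    simp only [q, p, Matrix.cons_val_zero, Matrix.cons_val_one, Matrix.head_cons,
      Matrix.cons_val_two, Matrix.tail_cons, map_add, map_mul, map_pow, MvPolynomial.aeval_X,
      MvPolynomial.aeval_C, MvPolynomial.algebraMap_eq]
    · linear_combination (MvPolynomial.X 0 : MvPolynomial (Fin 3) k) * E1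
  have hpq1 : MvPolynomial.aeval p (q 1) = (MvPolynomial.X 1 : MvPolynomial (Fin 3) k) := by
    simp only [q, p, Matrix.cons_val_zero, Matrix.cons_val_one, Matrix.head_cons,
      Matrix.cons_val_two, Matrix.tail_cons, map_add, map_mul, map_pow, MvPolynomial.aeval_X,
      MvPolynomial.aeval_C, MvPolynomial.algebraMap_eq]
    linear_combination (MvPolynomial.X 1 : MvPolynomial (Fin 3) k) * E2 +
        (MvPolynomial.C α * MvPolynomial.C μ * MvPolynomial.C l⁻¹ * MvPolynomial.X 0 :
          MvPolynomial (Fin 3) k) * E7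
  have hpq2 : MvPolynomial.aeval p (q 2) = (MvPolynomial.X 2 : MvPolynomial (Fin 3) k) := by
    simp only [q, p, Matrix.cons_val_zero, Matrix.cons_val_one, Matrix.head_cons,
      Matrix.cons_val_two, Matrix.tail_cons, map_add, map_mul, map_pow, MvPolynomial.aeval_X,
      MvPolynomial.aeval_C, MvPolynomial.algebraMap_eq]
    linear_combination (MvPolynomial.C β * MvPolynomial.C l * MvPolynomial.C μ *
        MvPolynomial.X 0 * MvPolynomial.X 1 +
        MvPolynomial.C α * MvPolynomial.C β * MvPolynomial.C μ ^ 2 * MvPolynomial.X 0 ^ 2 :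
          MvPolynomial (Fin 3) k) * E7
  have hpq : ∀ i, MvPolynomial.aeval p (q i) = (MvPolynomial.X i : MvPolynomial (Fin 3) k) := by
    intro i
    fin_cases i
    exacts [hpq0, hpq1, hpq2]
  have hqp0 : MvPolynomial.aeval q (p 0) = (MvPolynomial.X 0 : MvPolynomial (Fin 3) k) := by
    simp only [q, p, Matrix.cons_val_zero, Matrix.cons_val_one, Matrix.head_cons,
      Matrix.cons_val_two, Matrix.tail_cons, map_add, map_mul, map_pow, MvPolynomial.aeval_X,
      MvPolynomial.aeval_C, MvPolynomial.algebraMap_eq]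
    · linear_combination (MvPolynomial.C α * MvPolynomial.X 1 : MvPolynomial (Fin 3) k) * E1 +
        (MvPolynomial.C α * MvPolynomial.X 1 + MvPolynomial.X 0 : MvPolynomial (Fin 3) k) * E2 +
        (MvPolynomial.C α * MvPolynomial.X 1 : MvPolynomial (Fin 3) k) * E7
  have hqp1 : MvPolynomial.aeval q (p 1) = (MvPolynomial.X 1 : MvPolynomial (Fin 3) k) := by
    simp only [q, p, Matrix.cons_val_zero, Matrix.cons_val_one, Matrix.head_cons,
      Matrix.cons_val_two, Matrix.tail_cons, map_add, map_mul, map_pow, MvPolynomial.aeval_X,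
      MvPolynomial.aeval_C, MvPolynomial.algebraMap_eq]
    linear_combination (MvPolynomial.X 1 : MvPolynomial (Fin 3) k) * E1
  have hqp2 : MvPolynomial.aeval q (p 2) = (MvPolynomial.X 2 : MvPolynomial (Fin 3) k) := by
    simp only [q, p, Matrix.cons_val_zero, Matrix.cons_val_one, Matrix.head_cons,
      Matrix.cons_val_two, Matrix.tail_cons, map_add, map_mul, map_pow, MvPolynomial.aeval_X,
      MvPolynomial.aeval_C, MvPolynomial.algebraMap_eq]
    linear_combination
        ((MvPolynomial.C β * MvPolynomial.X 0 * MvPolynomial.X 1 +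
          MvPolynomial.C α * MvPolynomial.C β * MvPolynomial.X 1 ^ 2) * MvPolynomial.C l *
            MvPolynomial.C l⁻¹ : MvPolynomial (Fin 3) k) * E1 +
        (MvPolynomial.C β * MvPolynomial.X 0 * MvPolynomial.X 1 +
          MvPolynomial.C α * MvPolynomial.C β * MvPolynomial.X 1 ^ 2 :
            MvPolynomial (Fin 3) k) * E2 +
        (MvPolynomial.C β * MvPolynomial.X 0 * MvPolynomial.X 1 +
          MvPolynomial.C α * MvPolynomial.C β * MvPolynomial.X 1 ^ 2 :
            MvPolynomial (Fin 3) k) * E7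
  have hqp : ∀ i, MvPolynomial.aeval q (p i) = (MvPolynomial.X i : MvPolynomial (Fin 3) k) := by
    intro i
    fin_cases i
    exacts [hqp0, hqp1, hqp2]
  set G : MvPolynomial (Fin 3) k :=
    MvPolynomial.X 2 ^ 2 + MvPolynomial.C c * (MvPolynomial.X 0 ^ 3 * MvPolynomial.X 1) +
      (MvPolynomial.C a * MvPolynomial.X 0 + MvPolynomial.C b) * MvPolynomial.X 1 ^ 3 with hG
  set F : MvPolynomial (Fin 3) k :=
    MvPolynomial.X 2 ^ 2 + MvPolynomial.X 0 ^ 3 + MvPolynomial.X 0 * MvPolynomial.X 1 ^ 3 with hF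
  have keyPoly : MvPolynomial.aeval p G = F := by
    rw [hG, hF]
    simp only [p, Matrix.cons_val_zero, Matrix.cons_val_one, Matrix.head_cons,
      Matrix.cons_val_two, Matrix.tail_cons, map_add, map_mul, map_pow, MvPolynomial.aeval_X,
      MvPolynomial.aeval_C, MvPolynomial.algebraMap_eq]
    linear_combination (MvPolynomial.C β * MvPolynomial.C l * MvPolynomial.C μ *
        MvPolynomial.X 0 * MvPolynomial.X 1 * MvPolynomial.X 2 : MvPolynomial (Fin 3) k) * E7 +
      (MvPolynomial.C l ^ 2 * MvPolynomial.C μ ^ 2 * MvPolynomial.X 0 ^ 2 *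
        MvPolynomial.X 1 ^ 2 : MvPolynomial (Fin 3) k) * E4 +
      ((2 : MvPolynomial (Fin 3) k) * MvPolynomial.C c * MvPolynomial.C α *
        MvPolynomial.C l ^ 2 * MvPolynomial.C μ ^ 2 * MvPolynomial.X 0 ^ 2 *
          MvPolynomial.X 1 ^ 2) * E7 +
      (MvPolynomial.C α * MvPolynomial.C μ ^ 4 * MvPolynomial.X 0 ^ 4 :
        MvPolynomial (Fin 3) k) * E3 +
      (MvPolynomial.C a * MvPolynomial.C α * MvPolynomial.C μ ^ 4 * MvPolynomial.X 0 ^ 4 :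
        MvPolynomial (Fin 3) k) * E7 +
      ((3 : MvPolynomial (Fin 3) k) * MvPolynomial.C l * MvPolynomial.C μ ^ 3 *
        MvPolynomial.X 0 ^ 3 * MvPolynomial.X 1) * E3 +
      ((2 : MvPolynomial (Fin 3) k) * MvPolynomial.C a * MvPolynomial.C l *
        MvPolynomial.C μ ^ 3 * MvPolynomial.X 0 ^ 3 * MvPolynomial.X 1) * E7 +
      (MvPolynomial.X 0 * MvPolynomial.X 1 ^ 3 : MvPolynomial (Fin 3) k) * E6 +
      (MvPolynomial.X 0 ^ 3 : MvPolynomial (Fin 3) k) * E5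
  let Φ := substEquiv p q hp hq hpq hqp
  have hg : ((X 2 : MvPowerSeries (Fin 3) k) ^ 2 +
      MvPowerSeries.C (σ := Fin 3) (R := k) c * (X 0 ^ 3 * X 1) +
      (MvPowerSeries.C (σ := Fin 3) (R := k) a * X 0 + MvPowerSeries.C (σ := Fin 3) (R := k) b) * X 1 ^ 3)
      = ((G : MvPolynomial (Fin 3) k) : MvPowerSeries (Fin 3) k) := by
    rw [hG]
    push_cast
    rfl
  have hf : ((X 2 : MvPowerSeries (Fin 3) k) ^ 2 + X 0 ^ 3 + X 0 * X 1 ^ 3)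
      = ((F : MvPolynomial (Fin 3) k) : MvPowerSeries (Fin 3) k) := by
    rw [hF]
    push_cast
    rfl
  have hΦg : Φ (((G : MvPolynomial (Fin 3) k) : MvPowerSeries (Fin 3) k))
      = ((F : MvPolynomial (Fin 3) k) : MvPowerSeries (Fin 3) k) := by
    rw [substEquiv_apply, S_coe p hp, keyPoly]
  refine ⟨Ideal.quotientEquivAlg _ _ Φ ?_⟩
  rw [hg, hf, Ideal.map_span]
  congr 1
  rw [Set.image_singleton]
  congr 1
  exact hΦg.symm
end

section
/- Let a ∈ k be nonzero and let δ be the k-derivation (x³ + ay²)·∂/∂x + x²y·∂/∂y of k[x,y]. Then the kernel of δ equals the k-subalgebra of k[x,y] generated by x², y² and x³y + ay³. -/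
open MvPolynomial

section Aux

variable {k : Type*} [Field k] [IsAlgClosed k] [CharP k 2]

private lemma der_sq (D : Derivation k (MvPolynomial (Fin 2) k) (MvPolynomial (Fin 2) k))
    (s : MvPolynomial (Fin 2) k) : D (s ^ 2) = 0 := by
  rw [pow_two, Derivation.leibniz]
  exact CharTwo.add_self_eq_zero _

/-- Linear independence of 1, x, y, xy over squares. -/
private lemma indep (t0 t1 t2 t3 : MvPolynomial (Fin 2) k)
    (h : t0 ^ 2 + t1 ^ 2 * X 0 + t2 ^ 2 * X 1 + t3 ^ 2 * (X 0 * X 1) = 0) :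
    t0 = 0 ∧ t1 = 0 ∧ t2 = 0 ∧ t3 = 0 := by
  have h0 : pderiv 0 (t0 ^ 2 + t1 ^ 2 * X 0 + t2 ^ 2 * X 1 + t3 ^ 2 * (X 0 * X 1)) = 0 := by
    rw [h]; simp
  have h1 : pderiv 1 (t0 ^ 2 + t1 ^ 2 * X 0 + t2 ^ 2 * X 1 + t3 ^ 2 * (X 0 * X 1)) = 0 := by
    rw [h]; simp
  simp only [map_add, Derivation.leibniz, der_sq, smul_zero, add_zero, smul_eq_mul,
    pderiv_X_self, pderiv_X_of_ne (by norm_num : (0 : Fin 2) ≠ 1),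
    pderiv_X_of_ne (by norm_num : (1 : Fin 2) ≠ 0), mul_one, mul_zero, zero_add] at h0 h1
  -- h0 : t1 ^ 2 + t3 ^ 2 * X 1 = 0   (roughly)
  have h3 : pderiv 1 (t1 ^ 2 + t3 ^ 2 * X 1) = 0 := by
    rw [show t1 ^ 2 + t3 ^ 2 * X 1 = 0 by linear_combination h0]; simp
  simp only [map_add, Derivation.leibniz, der_sq, smul_zero, add_zero, smul_eq_mul,
    pderiv_X_self, mul_one, mul_zero, zero_add] at h3
  have ht3 : t3 = 0 := by
    have : t3 ^ 2 = 0 := by linear_combination h3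
    exact pow_eq_zero_iff (two_ne_zero) |>.mp this
  have ht1 : t1 = 0 := by
    have : t1 ^ 2 = 0 := by rw [ht3] at h0; linear_combination h0
    exact pow_eq_zero_iff (two_ne_zero) |>.mp this
  have ht2 : t2 = 0 := by
    have : t2 ^ 2 = 0 := by rw [ht3] at h1; linear_combination h1
    exact pow_eq_zero_iff (two_ne_zero) |>.mp this
  have ht0 : t0 = 0 := by
    have : t0 ^ 2 = 0 := by rw [ht1, ht2, ht3] at h; linear_combination h
    exact pow_eq_zero_iff (two_ne_zero) |>.mp this
  exact ⟨ht0, ht1, ht2, ht3⟩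

/-- Every polynomial decomposes over squares with basis 1, x, y, xy. -/
private lemma decomp (f : MvPolynomial (Fin 2) k) :
    ∃ s0 s1 s2 s3 : MvPolynomial (Fin 2) k,
      f = s0 ^ 2 + s1 ^ 2 * X 0 + s2 ^ 2 * X 1 + s3 ^ 2 * (X 0 * X 1) := by
  induction f using MvPolynomial.induction_on with
  | C r =>
      obtain ⟨b, hb⟩ := IsAlgClosed.exists_pow_nat_eq r (n := 2) two_pos
      exact ⟨C b, 0, 0, 0, by rw [← map_pow, hb]; ring⟩
  | add p q hp hq =>
      obtain ⟨p0, p1, p2, p3, hp⟩ := hp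
      obtain ⟨q0, q1, q2, q3, hq⟩ := hq
      refine ⟨p0 + q0, p1 + q1, p2 + q2, p3 + q3, ?_⟩
      rw [hp, hq, CharTwo.add_sq, CharTwo.add_sq, CharTwo.add_sq, CharTwo.add_sq]
      ring
  | mul_X p i hp =>
      obtain ⟨p0, p1, p2, p3, hp⟩ := hp
      have : i = 0 ∨ i = 1 := by omega
      rcases this with rfl | rfl
      · exact ⟨p1 * X 0, p0, p3 * X 0, p2, by rw [hp]; ring⟩
      · exact ⟨p2 * X 1, p3 * X 1, p0, p1, by rw [hp]; ring⟩

private lemma sq_mem (a : k) (u : MvPolynomial (Fin 2) k) :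
    u ^ 2 ∈ Algebra.adjoin k ({X 0 ^ 2, X 1 ^ 2, X 0 ^ 3 * X 1 + C a * X 1 ^ 3} :
        Set (MvPolynomial (Fin 2) k)) := by
  induction u using MvPolynomial.induction_on with
  | C r =>
      rw [← map_pow]
      exact Subalgebra.algebraMap_mem _ (r ^ 2)
  | add p q hp hq =>
      rw [CharTwo.add_sq]
      exact add_mem hp hq
  | mul_X p i hp =>
      rw [mul_pow]
      refine mul_mem hp (Algebra.subset_adjoin ?_)
      fin_cases i <;> simp

private lemma prime_X1 : Prime (X 1 : MvPolynomial (Fin 2) k) := by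
  refine (MulEquiv.prime_iff (finSuccEquiv k 1).toMulEquiv).mp ?_
  have h1 : ((finSuccEquiv k 1).toMulEquiv (X 1) : Polynomial (MvPolynomial (Fin 1) k))
      = Polynomial.C (X 0) := by
    show (finSuccEquiv k 1) (X 1) = Polynomial.C (X 0)
    exact finSuccEquiv_X_succ (j := 0)
  rw [h1, Polynomial.prime_C_iff]
  refine (MulEquiv.prime_iff (finSuccEquiv k 0).toMulEquiv).mp ?_
  have h2 : ((finSuccEquiv k 0).toMulEquiv (X 0) : Polynomial (MvPolynomial (Fin 0) k))
      = Polynomial.X := by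
    show (finSuccEquiv k 0) (X 0) = Polynomial.X
    exact finSuccEquiv_X_zero
  rw [h2]
  exact Polynomial.prime_X

private lemma X1_not_dvd_X0 : ¬ (X 1 : MvPolynomial (Fin 2) k) ∣ X 0 := by
  rintro ⟨c, hc⟩
  have := congrArg (eval (fun i : Fin 2 => if i = 0 then 1 else 0)) hc
  simp at this

end Aux

/-- For a ≠ 0 and δ = (x³ + ay²)·∂/∂x + x²y·∂/∂y, the kernel of δ equals
the k-subalgebra generated by x², y², x³y + ay³. -/
theorem stmt_17 (k : Type*) [Field k] [IsAlgClosed k] [CharP k 2] (a : k) (ha : a ≠ 0)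
    (δ : Derivation k (MvPolynomial (Fin 2) k) (MvPolynomial (Fin 2) k))
    (hδ : δ = mkDerivation k
      ![(X 0 : MvPolynomial (Fin 2) k) ^ 3 + C a * X 1 ^ 2, X 0 ^ 2 * X 1]) :
    {f : MvPolynomial (Fin 2) k | δ f = 0} =
      ↑(Algebra.adjoin k ({X 0 ^ 2, X 1 ^ 2, X 0 ^ 3 * X 1 + C a * X 1 ^ 3} :
          Set (MvPolynomial (Fin 2) k))) := by
  have h2 : (2 : MvPolynomial (Fin 2) k) = 0 := CharTwo.two_eq_zero
  have hx : δ (X 0) = X 0 ^ 3 + C a * X 1 ^ 2 := by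
    rw [hδ, mkDerivation_X]
    simp
  have hy : δ (X 1) = X 0 ^ 2 * X 1 := by
    rw [hδ, mkDerivation_X]
    simp
  have hC : ∀ r : k, δ (C r) = 0 := fun r => by
    have := δ.map_algebraMap r
    simpa [algebraMap_eq] using this
  ext f
  simp only [Set.mem_setOf_eq, SetLike.mem_coe]
  constructor
  · intro hf
    obtain ⟨s0, s1, s2, s3, hD⟩ := decomp f
    obtain ⟨b, hb⟩ := IsAlgClosed.exists_pow_nat_eq a (n := 2) two_pos
    have hbne : b ≠ 0 := by
      rintro rfl
      rw [← hb] at ha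
      simp at ha
    have hCb : (C b : MvPolynomial (Fin 2) k) ^ 2 = C a := by rw [← map_pow, hb]
    have hδf : s1 ^ 2 * (X 0 ^ 3 + C a * X 1 ^ 2) + s2 ^ 2 * (X 0 ^ 2 * X 1)
        + s3 ^ 2 * (X 0 * (X 0 ^ 2 * X 1) + X 1 * (X 0 ^ 3 + C a * X 1 ^ 2)) = 0 := by
      rw [hD] at hf
      simp only [map_add, Derivation.leibniz, der_sq, smul_zero, add_zero, smul_eq_mul,
        hx, hy, mul_zero, zero_add] at hf
      linear_combination hf
    have key : (C b * (s1 * X 1)) ^ 2 + (s1 * X 0) ^ 2 * X 0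
        + (s2 * X 0 + C b * (s3 * X 1)) ^ 2 * X 1 + (0 : MvPolynomial (Fin 2) k) ^ 2 * (X 0 * X 1)
        = 0 := by
      linear_combination hδf + (s1 ^ 2 * X 1 ^ 2 + s3 ^ 2 * X 1 ^ 3) * hCb
        + (C b * s2 * s3 * X 0 * X 1 ^ 2 - s3 ^ 2 * X 0 ^ 3 * X 1) * h2
    obtain ⟨-, h1, h23, -⟩ := indep _ _ _ _ key
    have hs1 : s1 = 0 := by
      rcases mul_eq_zero.mp h1 with h | h
      · exact h
      · exact absurd h (X_ne_zero 0)
    have h23' : s2 * X 0 = C b * (s3 * X 1) := by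
      linear_combination h23 - (C b * (s3 * X 1)) * h2
    obtain ⟨t, ht⟩ : (X 1 : MvPolynomial (Fin 2) k) ∣ s2 := by
      have hdvd : (X 1 : MvPolynomial (Fin 2) k) ∣ s2 * X 0 :=
        ⟨C b * s3, by linear_combination h23'⟩
      rcases prime_X1.2.2 _ _ hdvd with h | h
      · exact h
      · exact absurd h X1_not_dvd_X0
    have hbb : (C b : MvPolynomial (Fin 2) k) * C b⁻¹ = 1 := by
      rw [← map_mul, mul_inv_cancel₀ hbne, map_one]
    have hCbne : (C b : MvPolynomial (Fin 2) k) ≠ 0 := by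
      simpa using hbne
    have hs3 : s3 = C b⁻¹ * (t * X 0) := by
      apply mul_left_cancel₀ hCbne
      apply mul_left_cancel₀ (X_ne_zero (R := k) (1 : Fin 2))
      linear_combination X 0 * ht - h23' - (X 1 * t * X 0) * hbb
    have hfeq : f = s0 ^ 2 + (C b⁻¹ * t) ^ 2 * (X 0 ^ 3 * X 1 + C a * X 1 ^ 3) := by
      rw [hD, hs1, ht, hs3]
      linear_combination (t ^ 2 * X 1 ^ 3 * (C b⁻¹) ^ 2) * hCb
        - (t ^ 2 * X 1 ^ 3 * (1 + C b * C b⁻¹)) * hbb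
    rw [hfeq]
    exact add_mem (sq_mem a s0) (mul_mem (sq_mem a _) (Algebra.subset_adjoin (by simp)))
  · intro hf
    have hx2 : δ (X 0 ^ 2) = 0 := der_sq δ _
    have hy2 : δ (X 1 ^ 2) = 0 := der_sq δ _
    have hx3 : δ (X 0 ^ 3) = X 0 ^ 2 * (X 0 ^ 3 + C a * X 1 ^ 2) := by
      conv_lhs => rw [show (X 0 : MvPolynomial (Fin 2) k) ^ 3 = X 0 ^ 2 * X 0 from by ring]
      rw [Derivation.leibniz, hx2, hx, smul_eq_mul, smul_zero, add_zero]
    have hy3 : δ (X 1 ^ 3) = X 1 ^ 2 * (X 0 ^ 2 * X 1) := by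
      conv_lhs => rw [show (X 1 : MvPolynomial (Fin 2) k) ^ 3 = X 1 ^ 2 * X 1 from by ring]
      rw [Derivation.leibniz, hy2, hy, smul_eq_mul, smul_zero, add_zero]
    induction hf using Algebra.adjoin_induction with
    | mem g hg =>
        rcases hg with rfl | rfl | rfl
        · exact hx2
        · exact hy2
        · rw [map_add, Derivation.leibniz, Derivation.leibniz, hx3, hy3, hy, hC,
            smul_eq_mul, smul_eq_mul, smul_eq_mul, smul_zero, add_zero]
          linear_combination (X 0 ^ 5 * X 1 + C a * X 0 ^ 2 * X 1 ^ 3) * h2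
    | algebraMap r => exact δ.map_algebraMap r
    | add p q hp hq ihp ihq => rw [map_add, ihp, ihq, add_zero]
    | mul p q hp hq ihp ihq => rw [Derivation.leibniz, ihp, ihq, smul_zero, smul_zero, add_zero]
end

section
/- Let a ∈ k be nonzero and c ∈ k arbitrary. The k-subalgebra of k[x,y] generated by x², y² and (x+cy)³ + a(x+cy)y³ is isomorphic, as a k-algebra, to k[X,Y,Z]/(Z² + X³ + XY³). -/
open MvPolynomial

lemma expand_two_injective {k : Type*} [Field k] [CharP k 2] [PerfectRing k 2] {σ : Type*} :
    Function.Injective (expand 2 : MvPolynomial σ k →ₐ[k] MvPolynomial σ k) := by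
  have hcomp : ((expand 2 : MvPolynomial σ k →ₐ[k] MvPolynomial σ k) :
      MvPolynomial σ k →+* MvPolynomial σ k).comp
      (MvPolynomial.map (frobenius k 2)) = frobenius (MvPolynomial σ k) 2 := by
    apply MvPolynomial.ringHom_ext
    · intro r
      simp [frobenius_def]
    · intro i
      simp [frobenius_def]
  have h0 : ∀ p : MvPolynomial σ k, expand 2 p = 0 → p = 0 := by
    intro p hp
    set p' := MvPolynomial.map ((frobeniusEquiv k 2).symm : k →+* k) p with hp'
    have hmap : MvPolynomial.map (frobenius k 2) p' = p := by
      rw [hp', MvPolynomial.map_map]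
      have h1 : (frobenius k 2).comp ((frobeniusEquiv k 2).symm : k →+* k) = RingHom.id k := by
        ext x
        simp
      rw [h1, MvPolynomial.map_id]
    have h2 : frobenius (MvPolynomial σ k) 2 p' = 0 := by
      rw [← hcomp]
      simpa [hmap] using hp
    have hp'0 : p' = 0 := by
      rw [frobenius_def] at h2
      exact pow_eq_zero_iff (two_ne_zero) |>.mp h2
    rw [← hmap, hp'0, map_zero]
  intro p q h
  have h3 : p - q = 0 := h0 _ (by rw [map_sub, h, sub_self])
  exact sub_eq_zero.mp h3

set_option maxHeartbeats 1000000 in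
/-- For a ≠ 0 and arbitrary c,
k[x², y², (x+cy)³ + a(x+cy)y³] ≅ k[X,Y,Z]/(Z² + X³ + XY³). -/
theorem stmt_19 (k : Type*) [Field k] [IsAlgClosed k] [CharP k 2] (a c : k) (ha : a ≠ 0) :
    Nonempty
      ((Algebra.adjoin k
          ({X 0 ^ 2, X 1 ^ 2,
            (X 0 + C c * X 1) ^ 3 + C a * ((X 0 + C c * X 1) * X 1 ^ 3)} :
            Set (MvPolynomial (Fin 2) k))) ≃ₐ[k]
        (MvPolynomial (Fin 3) k ⧸
          Ideal.span {(X 2 : MvPolynomial (Fin 3) k) ^ 2 + X 0 ^ 3 + X 0 * X 1 ^ 3})) := by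
  classical
  obtain ⟨α, hα⟩ := IsAlgClosed.exists_pow_nat_eq (k := k) (a ^ 2) (n := 3) (by norm_num)
  have hαne : α ≠ 0 := by
    intro h
    rw [h] at hα
    exact ha (by simpa [pow_eq_zero_iff] using hα.symm)
  set R2 := MvPolynomial (Fin 2) k with hR2
  have h2 : (2 : R2) = 0 := by
    have := CharP.cast_eq_zero R2 2
    exact_mod_cast this
  set w : R2 := (X 0 + C c * X 1) ^ 3 + C a * ((X 0 + C c * X 1) * X 1 ^ 3) with hw
  set s : R2 := X 0 ^ 2 + C (c ^ 2) * X 1 ^ 2 with hs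
  set v : R2 := C α * X 1 ^ 2 with hv
  have hcD : (C (c ^ 2) : R2) = C c ^ 2 := by rw [pow_two, pow_two, C_mul]
  have hq2 : ((X 0 + C c * X 1 : R2)) ^ 2 = s := by
    rw [hs]
    linear_combination (X 0 * X 1 * C c : R2) * h2 - (X 1 : R2) ^ 2 * hcD
  have hCα3 : (C α : R2) ^ 3 = (C a) ^ 2 := by
    rw [← map_pow, ← map_pow, hα]
  set ψ : MvPolynomial (Fin 3) k →ₐ[k] R2 := aeval ![s, v, w] with hψ
  set f : MvPolynomial (Fin 3) k := X 2 ^ 2 + X 0 ^ 3 + X 0 * X 1 ^ 3 with hf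
  have hψf : ψ f = 0 := by
    have hval : ψ f = w ^ 2 + s ^ 3 + s * v ^ 3 := by
      simp [hψ, hf]
    rw [hval, hw, hv]
    linear_combination
      (((X 0 + C c * X 1 : R2)) ^ 4 + ((X 0 + C c * X 1 : R2)) ^ 2 * s + s ^ 2
        + (C a : R2) ^ 2 * X 1 ^ 6) * hq2
      + (s * (X 1 : R2) ^ 6) * hCα3
      + ((C (c^2)) ^ 3 * X 1 ^ 6 + C a * C c ^ 4 * X 1 ^ 7 + C (c^2) * C a ^ 2 * X 1 ^ 8
        + 4 * C a * C c ^ 3 * X 0 * X 1 ^ 6 + 3 * C (c^2) ^ 2 * X 0 ^ 2 * X 1 ^ 4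
        + 6 * C a * C c ^ 2 * X 0 ^ 2 * X 1 ^ 5 + C a ^ 2 * X 0 ^ 2 * X 1 ^ 6
        + 4 * C a * C c * X 0 ^ 3 * X 1 ^ 4 + 3 * C (c^2) * X 0 ^ 4 * X 1 ^ 2
        + C a * X 0 ^ 4 * X 1 ^ 3 + X 0 ^ 6 : R2) * h2
  -- the auxiliary maps β, L, M and injectivity of β
  set β : R2 →ₐ[k] R2 := aeval ![v, s] with hβ
  set L : R2 →ₐ[k] R2 := aeval ![C α * X 1, X 0 + C (c ^ 2) * X 1] with hL
  set M : R2 →ₐ[k] R2 := aeval ![X 1 - C (c ^ 2 * α⁻¹) * X 0, C α⁻¹ * X 0] with hM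
  have hL0 : L (X 0) = C α * X 1 := by rw [hL, aeval_X]; rfl
  have hL1 : L (X 1) = X 0 + C (c ^ 2) * X 1 := by rw [hL, aeval_X]; rfl
  have hM0 : M (X 0) = X 1 - C (c ^ 2 * α⁻¹) * X 0 := by rw [hM, aeval_X]; rfl
  have hM1 : M (X 1) = C α⁻¹ * X 0 := by rw [hM, aeval_X]; rfl
  have hβ0 : β (X 0) = v := by rw [hβ, aeval_X]; rfl
  have hβ1 : β (X 1) = s := by rw [hβ, aeval_X]; rfl
  have hβL : ((expand 2 : R2 →ₐ[k] R2)).comp L = β := by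
    apply MvPolynomial.algHom_ext
    intro i
    fin_cases i
    · rw [AlgHom.comp_apply]
      show (expand 2 : R2 →ₐ[k] R2) (L (X 0)) = β (X 0)
      rw [hL0, hβ0, map_mul, expand_X, expand_C, hv]
    · rw [AlgHom.comp_apply]
      show (expand 2 : R2 →ₐ[k] R2) (L (X 1)) = β (X 1)
      rw [hL1, hβ1, map_add, map_mul, expand_X, expand_X, expand_C, hs]
  have hML : M.comp L = AlgHom.id k R2 := by
    apply MvPolynomial.algHom_ext
    intro i
    fin_cases i
    · show M (L (X 0)) = X 0
      rw [hL0, map_mul, hM1, aeval_C]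
      rw [show algebraMap k R2 α = C α from rfl, ← mul_assoc, ← C_mul,
        mul_inv_cancel₀ hαne, C_1, one_mul]
    · show M (L (X 1)) = X 1
      rw [hL1, map_add, map_mul, hM0, hM1, aeval_C]
      rw [show algebraMap k R2 (c ^ 2) = C (c ^ 2) from rfl, ← mul_assoc, ← C_mul]
      ring
  have hLinj : Function.Injective L := by
    intro p q h
    have h' := congrArg M h
    rw [← AlgHom.comp_apply, ← AlgHom.comp_apply, hML, AlgHom.id_apply, AlgHom.id_apply] at h'
    exact h'
  have hβinj : Function.Injective β := by
    rw [← hβL, AlgHom.coe_comp]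
    exact Function.Injective.comp expand_two_injective hLinj
  -- partial derivative facts
  have hne : (1 : Fin 2) ≠ 0 := by decide
  have hDv : pderiv (0 : Fin 2) v = 0 := by
    rw [hv, pderiv_mul, pderiv_pow, pderiv_C, pderiv_X_of_ne hne]
    push_cast
    ring
  have hDs : pderiv (0 : Fin 2) s = 0 := by
    rw [hs, map_add, pderiv_mul, pderiv_pow, pderiv_pow, pderiv_C, pderiv_X_self,
      pderiv_X_of_ne hne]
    push_cast
    linear_combination (X 0 : R2) * h2
  have hβD : ∀ p : R2, pderiv (0 : Fin 2) (β p) = 0 := by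
    intro p
    induction p using MvPolynomial.induction_on with
    | C r =>
        rw [show β (C r) = C r from by rw [hβ, aeval_C]; rfl]
        simp
    | add p q hp hq => rw [map_add, map_add, hp, hq, add_zero]
    | mul_X p i hp =>
        rw [map_mul, pderiv_mul, hp, zero_mul, zero_add]
        fin_cases i
        · show β p * pderiv (0 : Fin 2) (β (X 0)) = 0
          rw [hβ0, hDv, mul_zero]
        · show β p * pderiv (0 : Fin 2) (β (X 1)) = 0
          rw [hβ1, hDs, mul_zero]
  have hDw : pderiv (0 : Fin 2) w = (X 0 + C c * X 1) ^ 2 + C a * X 1 ^ 3 := by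
    rw [hw]
    simp only [map_add, pderiv_mul, pderiv_pow, pderiv_C, pderiv_X_self,
      pderiv_X_of_ne hne, zero_mul, mul_zero, zero_add, add_zero, mul_one]
    push_cast
    linear_combination ((X 0 + C c * X 1 : R2) ^ 2) * h2
  have hkey : coeff (Finsupp.single 1 3)
      ((X 0 : R2) ^ 2 + C (c ^ 2) * X 1 ^ 2 + C a * X 1 ^ 3) = a := by
    have h01 : (Finsupp.single (0 : Fin 2) 2) ≠ Finsupp.single 1 3 := by
      simp [Finsupp.single_eq_single_iff]
    have h12 : (Finsupp.single (1 : Fin 2) 2) ≠ Finsupp.single 1 3 := by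
      simp [Finsupp.single_eq_single_iff]
    simp only [coeff_add, coeff_C_mul, coeff_X_pow, if_neg h01, if_neg h12]
    simp
  have hDwne : pderiv (0 : Fin 2) w ≠ 0 := by
    rw [hDw, hq2, hs]
    intro h0
    rw [h0, coeff_zero] at hkey
    exact ha hkey.symm
  -- the polynomial-algebra picture
  set e : MvPolynomial (Fin 3) k ≃ₐ[k] Polynomial R2 :=
    (renameEquiv k (Equiv.swap (0 : Fin 3) 2)).trans (finSuccEquiv k 2) with he
  have he0 : e (X 0) = Polynomial.C (X 1) := by
    simp [he, renameEquiv_apply, rename_X, Equiv.swap_apply_left]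
    rw [show (2 : Fin 3) = (Fin.succ 1) from rfl, finSuccEquiv_X_succ]
  have he1 : e (X 1) = Polynomial.C (X 0) := by
    simp [he, renameEquiv_apply, rename_X]
    rw [show Equiv.swap (0 : Fin 3) 2 1 = Fin.succ 0 from by decide, finSuccEquiv_X_succ]
  have he2 : e (X 2) = Polynomial.X := by
    simp [he, renameEquiv_apply, rename_X, Equiv.swap_apply_right]
    exact finSuccEquiv_X_zero
  set Ψ : Polynomial R2 →ₐ[k] R2 := Polynomial.aevalTower β w with hΨdef
  have hΨX : Ψ Polynomial.X = w := Polynomial.aevalTower_X β w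
  have hΨC : ∀ p : R2, Ψ (Polynomial.C p) = β p := fun p => Polynomial.aevalTower_C β w p
  have hcomp : Ψ.comp e.toAlgHom = ψ := by
    apply MvPolynomial.algHom_ext
    intro i
    fin_cases i
    · show Ψ (e (X 0)) = ψ (X 0)
      rw [he0, hΨC, hβ1, hψ, aeval_X]; rfl
    · show Ψ (e (X 1)) = ψ (X 1)
      rw [he1, hΨC, hβ0, hψ, aeval_X]; rfl
    · show Ψ (e (X 2)) = ψ (X 2)
      rw [he2, hΨX, hψ, aeval_X]; rfl
  have hcomp' : ∀ g, ψ g = Ψ (e g) := by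
    intro g
    rw [← hcomp]; rfl
  have hFeq : e f = Polynomial.X ^ 2 + Polynomial.C (X 1 ^ 3 + X 1 * X 0 ^ 3) := by
    rw [hf]
    simp only [map_add, map_pow, map_mul, he0, he1, he2]
    rw [← Polynomial.C_pow, ← Polynomial.C_pow, ← Polynomial.C_mul, add_assoc, ← Polynomial.C_add]
  have hFm : (e f).Monic := by
    rw [hFeq]
    exact Polynomial.monic_X_pow_add (by
      apply lt_of_le_of_lt (Polynomial.degree_C_le)
      norm_num)
  have hdegF : (e f).degree = 2 := by
    rw [hFeq]
    exact Polynomial.degree_X_pow_add_C (by norm_num) _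
  -- the kernel of ψ is exactly (f)
  have hker : RingHom.ker ψ = Ideal.span {f} := by
    apply le_antisymm
    · intro g hg
      rw [RingHom.mem_ker] at hg
      set q := e g /ₘ (e f) with hq
      set r := e g %ₘ (e f) with hr
      have hdiv : r + e f * q = e g := Polynomial.modByMonic_add_div (e g) (e f)
      have hΨef : Ψ (e f) = 0 := by rw [← hcomp' f, hψf]
      have hΨr : Ψ r = 0 := by
        have hg0 : Ψ (e g) = 0 := by rw [← hcomp' g, hg]
        calc Ψ r = Ψ (r + e f * q) - Ψ (e f) * Ψ q := by rw [map_add, map_mul]; ring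
          _ = 0 := by rw [hdiv, hg0, hΨef]; ring
      have hdegr : r.degree ≤ 1 := by
        by_cases h0 : r = 0
        · simp [h0]
        · have hlt := Polynomial.degree_modByMonic_lt (e g) hFm
          rw [hdegF] at hlt
          have h2' := (Polynomial.natDegree_lt_iff_degree_lt h0).mpr (by exact_mod_cast hlt)
          have h3' : r.natDegree ≤ 1 := Nat.lt_succ_iff.mp h2'
          exact_mod_cast Polynomial.degree_le_of_natDegree_le h3'
      have hrdec : r = Polynomial.C (r.coeff 1) * Polynomial.X + Polynomial.C (r.coeff 0) :=
        Polynomial.eq_X_add_C_of_degree_le_one hdegr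
      have heq : β (r.coeff 1) * w + β (r.coeff 0) = 0 := by
        have h' := hΨr
        rw [hrdec, map_add, map_mul, hΨC, hΨC, hΨX] at h'
        exact h'
      have h1 : β (r.coeff 1) * pderiv (0 : Fin 2) w = 0 := by
        have h' := congrArg (pderiv (0 : Fin 2)) heq
        rw [map_add, map_zero, pderiv_mul, hβD, hβD, zero_mul, add_zero, zero_add] at h'
        exact h'
      have hr1 : r.coeff 1 = 0 := by
        rcases mul_eq_zero.mp h1 with h | h
        · exact hβinj (by rw [h, map_zero])
        · exact absurd h hDwne
      have hr0 : r.coeff 0 = 0 := by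
        apply hβinj
        rw [map_zero]
        have h' := heq
        rw [hr1, map_zero, zero_mul, zero_add] at h'
        exact h'
      have hrz : r = 0 := by
        rw [hrdec, hr1, hr0, Polynomial.C_0, zero_mul, zero_add]
      have hgfq : e g = e f * q := by rw [← hdiv, hrz, zero_add]
      have hgf : g = f * e.symm q := by
        have h' := congrArg e.symm hgfq
        rw [e.symm_apply_apply, map_mul, e.symm_apply_apply] at h'
        exact h'
      rw [Ideal.mem_span_singleton]
      exact ⟨e.symm q, hgf⟩
    · rw [Ideal.span_le]
      intro x hx
      rw [Set.mem_singleton_iff] at hx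
      subst hx
      simpa [SetLike.mem_coe, RingHom.mem_ker] using hψf
  -- the range of ψ is the adjoin of the statement
  have hsetr : Set.range ![s, v, w] = ({s, v, w} : Set R2) := by
    ext t
    constructor
    · rintro ⟨i, rfl⟩
      fin_cases i <;> simp
    · intro ht
      rcases ht with h | h | h
      exacts [⟨0, h.symm⟩, ⟨1, h.symm⟩, ⟨2, h.symm⟩]
  have hrangeψ : ψ.range = Algebra.adjoin k ({X 0 ^ 2, X 1 ^ 2, w} : Set R2) := by
    rw [hψ, ← Algebra.adjoin_range_eq_range_aeval, hsetr]
    set A := Algebra.adjoin k ({X 0 ^ 2, X 1 ^ 2, w} : Set R2) with hA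
    set B := Algebra.adjoin k ({s, v, w} : Set R2) with hB
    have hu : (X 0 ^ 2 : R2) ∈ A := Algebra.subset_adjoin (Set.mem_insert _ _)
    have hu1 : (X 1 ^ 2 : R2) ∈ A :=
      Algebra.subset_adjoin (Set.mem_insert_of_mem _ (Set.mem_insert _ _))
    have hwA : w ∈ A :=
      Algebra.subset_adjoin (Set.mem_insert_of_mem _ (Set.mem_insert_of_mem _ rfl))
    have hsA : s ∈ A := by
      rw [hs]
      apply add_mem hu
      rw [← smul_eq_C_mul]
      exact Subalgebra.smul_mem A hu1 _
    have hvA : v ∈ A := by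
      rw [hv, ← smul_eq_C_mul]
      exact Subalgebra.smul_mem A hu1 _
    have hsB : s ∈ B := Algebra.subset_adjoin (Set.mem_insert _ _)
    have hvB : v ∈ B :=
      Algebra.subset_adjoin (Set.mem_insert_of_mem _ (Set.mem_insert _ _))
    have hwB : w ∈ B :=
      Algebra.subset_adjoin (Set.mem_insert_of_mem _ (Set.mem_insert_of_mem _ rfl))
    have hu1B : (X 1 ^ 2 : R2) ∈ B := by
      have hsm : (α⁻¹ : k) • v = (X 1 ^ 2 : R2) := by
        rw [hv, smul_eq_C_mul, ← mul_assoc, ← C_mul, inv_mul_cancel₀ hαne, C_1, one_mul]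
      rw [← hsm]
      exact Subalgebra.smul_mem B hvB _
    have huB : (X 0 ^ 2 : R2) ∈ B := by
      have hx0 : (X 0 ^ 2 : R2) = s - (c ^ 2 : k) • (X 1 ^ 2 : R2) := by
        rw [hs, smul_eq_C_mul]
        ring
      rw [hx0]
      exact sub_mem hsB (Subalgebra.smul_mem B hu1B _)
    apply le_antisymm
    · apply Algebra.adjoin_le
      intro t ht
      rcases ht with h | h | h <;> subst h
      exacts [hsA, hvA, hwA]
    · apply Algebra.adjoin_le
      intro t ht
      rcases ht with h | h | h <;> subst h
      exacts [huB, hu1B, hwB]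
  -- assemble the isomorphism
  refine ⟨?_⟩
  exact (Subalgebra.equivOfEq _ _ hrangeψ.symm).trans
    ((Ideal.quotientKerEquivRange ψ).symm.trans (Ideal.quotientEquivAlgOfEq k hker))
end
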